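/- Let λ ∈ (−1,0) and β > 1. For k ≥ 1 set q_k = (β−1)/((1−λ)(β^k − 1)), and define T : (0,∞) → (0,∞) by T(x) = −λx for x > q_1 and T(x) = ((β − λq_k)/q_k) · x for x ∈ (q_{k+1}, q_k], k ≥ 1. Set μ̄ = −λ/(1−λ) and ν̄ = β − λ/(1−λ). Then the segment [μ̄, ν̄] is positively invariant under T: T(x) ∈ [μ̄, ν̄] for every x ∈ [μ̄, ν̄]. -/

import Mathlib

open Set

/-- **Lemma 9.** Let `λ ∈ (-1,0)`, `β > 1`,
`q_k = (β-1)/((1-λ)(β^k - 1))`, and let `T` be the piecewise linear map with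
`T x = -λx` for `x > q_1` and `T x = ((β - λq_k)/q_k)·x` on `(q_{k+1}, q_k]`, `k ≥ 1`.
Then the segment `[μ̄, ν̄]` with `μ̄ = -λ/(1-λ)`, `ν̄ = β - λ/(1-λ)` is positively
invariant under `T`. -/
theorem poincareMap_invariant_segment
    (lam b : ℝ) (hlam : lam ∈ Ioo (-1 : ℝ) 0) (hb : 1 < b)
    (q : ℕ → ℝ) (hq : ∀ k : ℕ, q k = (b - 1) / ((1 - lam) * (b ^ k - 1)))
    (T : ℝ → ℝ)
    (hT1 : ∀ x : ℝ, q 1 < x → T x = -lam * x)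
    (hTk : ∀ k : ℕ, 1 ≤ k → ∀ x : ℝ, q (k + 1) < x → x ≤ q k →
      T x = ((b - lam * q k) / q k) * x) :
    ∀ x ∈ Icc (-lam / (1 - lam)) (b - lam / (1 - lam)),
      T x ∈ Icc (-lam / (1 - lam)) (b - lam / (1 - lam)) := by
  obtain ⟨hl1, hl0⟩ := hlam
  have h1l : (0:ℝ) < 1 - lam := by linarith
  have hb0 : (0:ℝ) < b := by linarith
  have hμ : 0 < -lam / (1 - lam) := div_pos (by linarith) h1l
  have hpow : ∀ k : ℕ, 1 ≤ k → (1:ℝ) < b ^ k := by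
    intro k hk
    exact one_lt_pow₀ hb (by omega)
  have hden : ∀ k : ℕ, 1 ≤ k → (0:ℝ) < (1 - lam) * (b ^ k - 1) := by
    intro k hk
    exact mul_pos h1l (by linarith [hpow k hk])
  have hq1 : q 1 = 1 / (1 - lam) := by
    rw [hq, div_eq_div_iff (hden 1 le_rfl).ne' h1l.ne', pow_one]
    ring
  have hqpos : ∀ k : ℕ, 1 ≤ k → 0 < q k := by
    intro k hk
    rw [hq]
    exact div_pos (by linarith) (hden k hk)
  intro x hx
  obtain ⟨hxl, hxu⟩ := hx
  have hxpos : 0 < x := lt_of_lt_of_le hμ hxl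
  by_cases hcase : q 1 < x
  · rw [hT1 x hcase]
    rw [hq1, div_lt_iff₀ h1l] at hcase
    constructor
    · rw [div_le_iff₀ h1l]
      nlinarith [mul_lt_mul_of_pos_left hcase (show (0:ℝ) < -lam by linarith)]
    · nlinarith [mul_pos (show (0:ℝ) < 1 + lam by linarith) hxpos]
  · push_neg at hcase
    -- find n ≥ 1 with q (n+1) < x ≤ q n
    have hex : ∃ m : ℕ, q (m + 1) < x := by
      obtain ⟨m, hm⟩ := pow_unbounded_of_one_lt ((b - 1) / ((1 - lam) * x) + 1) hb
      refine ⟨m, ?_⟩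
      have hbm : (b - 1) / ((1 - lam) * x) < b ^ (m + 1) - 1 := by
        have : (b:ℝ) ^ m ≤ b ^ (m + 1) := pow_le_pow_right₀ (le_of_lt hb) (by omega)
        linarith
      rw [div_lt_iff₀ (by positivity)] at hbm
      rw [hq, div_lt_iff₀ (hden (m + 1) (by omega))]
      nlinarith
    classical
    have hfind : q (Nat.find hex + 1) < x := Nat.find_spec hex
    set n := Nat.find hex with hn
    have hn1 : 1 ≤ n := by
      by_contra h
      have hn0 : n = 0 := by omega
      rw [hn0] at hfind
      exact absurd hfind (not_lt.mpr hcase)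
    have hxqn : x ≤ q n := by
      have h := Nat.find_min hex (m := n - 1) (by omega)
      push_neg at h
      have h' : x ≤ q (n - 1 + 1) := h
      rwa [Nat.sub_add_cancel hn1] at h'
    have hApos : 0 < q n := hqpos n hn1
    have hBpos : 0 < q (n + 1) := hqpos (n + 1) (by omega)
    have hpn : (1:ℝ) < b ^ n := hpow n hn1
    have hbn : b ≤ b ^ n := by
      calc b = b ^ 1 := (pow_one b).symm
      _ ≤ b ^ n := pow_le_pow_right₀ (le_of_lt hb) hn1
    have hslope : 0 < b - lam * q n := by nlinarith
    rw [hTk n hn1 x hfind hxqn]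
    -- key identity: (b - lam*q n)*q (n+1)*(1-lam) + lam*q n = b*q (n+1)
    have key : (b - lam * q n) * q (n + 1) * (1 - lam) + lam * q n
        = b * q (n + 1) := by
      rw [hq n, hq (n + 1)]
      have h1 : (1 - lam) * (b ^ n - 1) ≠ 0 := (hden n hn1).ne'
      have h2 : (1 - lam) * (b ^ (n + 1) - 1) ≠ 0 := (hden (n + 1) (by omega)).ne'
      have h3 : (1 - lam) ≠ 0 := h1l.ne'
      have h4 : (b ^ n - 1) ≠ 0 := by linarith [hpow n hn1]
      have h5 : (b ^ (n + 1) - 1) ≠ 0 := by linarith [hpow (n + 1) (by omega)]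
      field_simp
      ring
    have hAle : q n * (1 - lam) ≤ 1 := by
      rw [hq n, div_mul_eq_mul_div, div_le_one (hden n hn1)]
      nlinarith
    constructor
    · rw [div_le_iff₀ h1l, div_mul_eq_mul_div, div_mul_eq_mul_div,
        le_div_iff₀ hApos]
      nlinarith [mul_nonneg (mul_nonneg hslope.le (sub_nonneg.2 hfind.le)) h1l.le]
    · have step1 : (b - lam * q n) / q n * x ≤ b - lam * q n := by
        rw [div_mul_eq_mul_div, div_le_iff₀ hApos]
        nlinarith [mul_nonneg hslope.le (sub_nonneg.2 hxqn)]
      have step2 : lam / (1 - lam) ≤ lam * q n := by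
        rw [div_le_iff₀ h1l]
        nlinarith [mul_le_mul_of_nonpos_left hAle hl0.le]
      linarith
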